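/- For all positive integers $\sigma_1, \dots, \sigma_{m-1}, \sigma_m$ with $\sigma_m \geq 2$, the Mordell–Tornheim sum $T(\sigma_1,\dots,\sigma_{m-1};\sigma_m) = \sum_{n_1,\dots,n_{m-1}\geq 1} \frac{1}{n_1^{\sigma_1}\cdots n_{m-1}^{\sigma_{m-1}} (n_1+\cdots+n_{m-1})^{\sigma_m}}$ converges and is a finite $\mathbb{Z}$-linear combination of multiple zeta values of depth $m-1$ and weight $\sigma_1 + \cdots + \sigma_m$. -/

import Mathlib

open Finset

lemma sum_extend (n1 n2 : ℕ) (h : n2 ≤ n1) (c : ℕ → ℤ) (T : ℕ → ℝ) :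
    ∑ a ∈ Icc 1 n2, (c a : ℝ) * T a
      = ∑ a ∈ Icc 1 n1, ((if a ≤ n2 then c a else 0 : ℤ) : ℝ) * T a := by
  have h1 : ∑ a ∈ Icc 1 n2, ((if a ≤ n2 then c a else 0 : ℤ) : ℝ) * T a
      = ∑ a ∈ Icc 1 n1, ((if a ≤ n2 then c a else 0 : ℤ) : ℝ) * T a := by
    refine Finset.sum_subset (Finset.Icc_subset_Icc le_rfl h) ?_
    intro a ha hna
    simp only [Finset.mem_Icc] at ha hna
    rw [if_neg (by omega)]
    simp
  rw [← h1]
  exact Finset.sum_congr rfl fun a ha => by rw [if_pos (Finset.mem_Icc.mp ha).2]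

lemma sum_delta (n1 b : ℕ) (hb : b ∈ Icc 1 n1) (T : ℕ → ℝ) :
    T b = ∑ a ∈ Icc 1 n1, ((if a = b then 1 else 0 : ℤ) : ℝ) * T a := by
  have : ∀ a ∈ Icc 1 n1, ((if a = b then 1 else 0 : ℤ) : ℝ) * T a
      = if a = b then T a else 0 := by
    intro a _; split <;> simp
  rw [Finset.sum_congr rfl this, Finset.sum_ite_eq' (Finset.Icc 1 n1) b T, if_pos hb]

lemma lemA_mulstep (n : ℕ) (c : ℕ → ℤ) (u w : ℝ) :
    (∑ a ∈ Icc 1 (n-2), (c a : ℝ) * (1/(u^a * w^(n-1-a)))) * (1/w)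
      = ∑ a ∈ Icc 1 (n-1), ((if a ≤ n-2 then c a else 0 : ℤ) : ℝ) * (1/(u^a * w^(n-a))) := by
  rw [← sum_extend (n-1) (n-2) (by omega) c (fun a => 1/(u^a * w^(n-a))), Finset.sum_mul]
  refine Finset.sum_congr rfl fun a ha => ?_
  simp only [Finset.mem_Icc] at ha
  have h1 : n - 1 - a + 1 = n - a := by omega
  rw [mul_assoc, div_mul_div_comm, one_mul, mul_assoc, ← pow_succ, h1]

def PF (p q : ℕ) : Prop := ∃ c₁ c₂ : ℕ → ℤ, ∀ x y : ℝ, 0 < x → 0 < y →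
  1/(x^p * y^q) = (∑ a ∈ Finset.Icc 1 (p+q-1), (c₁ a : ℝ) * (1/(x^a * (x+y)^(p+q-a))))
    + ∑ a ∈ Finset.Icc 1 (p+q-1), (c₂ a : ℝ) * (1/(y^a * (x+y)^(p+q-a)))

lemma PF_swap (p q : ℕ) (h : PF q p) : PF p q := by
  obtain ⟨c₁, c₂, h⟩ := h
  refine ⟨c₂, c₁, fun x y hx hy => ?_⟩
  have := h y x hy hx
  rw [mul_comm (y^q) (x^p)] at this
  rw [this, add_comm]
  rw [show q + p = p + q from by omega, show y + x = x + y from by ring]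

lemma key_split (p q : ℕ) (hp : 1 ≤ p) (hq : 1 ≤ q) (x y : ℝ) (hx : 0 < x) (hy : 0 < y) :
    1/(x^p*y^q) = (1/(x^(p-1)*y^q))*(1/(x+y)) + (1/(x^p*y^(q-1)))*(1/(x+y)) := by
  have hx' := hx.ne'
  have hy' := hy.ne'
  have hxy : x + y ≠ 0 := by positivity
  have e1 : x^p = x^(p-1)*x := by rw [← pow_succ]; congr 1; omega
  have e2 : y^q = y^(q-1)*y := by rw [← pow_succ]; congr 1; omega
  rw [e1, e2]
  have hxp : x^(p-1) ≠ 0 := pow_ne_zero _ hx'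
  have hyq : y^(q-1) ≠ 0 := pow_ne_zero _ hy'
  field_simp

lemma lemA : ∀ n p q : ℕ, p + q = n → 1 ≤ p → 1 ≤ q → PF p q := by
  intro n
  induction n using Nat.strong_induction_on with
  | _ n IH =>
    have main : ∀ p q, p + q = n → 2 ≤ p → 1 ≤ q → PF p q := by
      intro p q hn hp hq
      obtain ⟨c₁, c₂, h1⟩ := IH (n-1) (by omega) (p-1) q (by omega) (by omega) hq
      have e : p - 1 + q = n - 1 := by omega
      rw [e] at h1
      have e2 : n - 1 - 1 = n - 2 := by omega
      rw [e2] at h1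
      by_cases hq2 : 2 ≤ q
      · obtain ⟨d₁, d₂, h2⟩ := IH (n-1) (by omega) p (q-1) (by omega) (by omega) (by omega)
        have e' : p + (q - 1) = n - 1 := by omega
        rw [e'] at h2
        rw [e2] at h2
        refine ⟨fun a => (if a ≤ n-2 then c₁ a else 0) + (if a ≤ n-2 then d₁ a else 0),
                fun a => (if a ≤ n-2 then c₂ a else 0) + (if a ≤ n-2 then d₂ a else 0),
                fun x y hx hy => ?_⟩
        rw [hn, key_split p q (by omega) hq x y hx hy, h1 x y hx hy, h2 x y hx hy,
            add_mul, add_mul, lemA_mulstep n c₁ x (x+y), lemA_mulstep n c₂ y (x+y),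
            lemA_mulstep n d₁ x (x+y), lemA_mulstep n d₂ y (x+y)]
        simp only [Int.cast_add, add_mul, Finset.sum_add_distrib]
        ring
      · -- q = 1
        have hq1 : q = 1 := by omega
        refine ⟨fun a => (if a ≤ n-2 then c₁ a else 0) + (if a = p then 1 else 0),
                fun a => (if a ≤ n-2 then c₂ a else 0),
                fun x y hx hy => ?_⟩
        have hdelta : 1/(x^p*y^(q-1))*(1/(x+y))
            = ∑ a ∈ Icc 1 (n-1), ((if a = p then 1 else 0 : ℤ) : ℝ) * (1/(x^a * (x+y)^(n-a))) := by
          rw [← sum_delta (n-1) p (by simp only [Finset.mem_Icc]; omega)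
                (fun a => 1/(x^a * (x+y)^(n-a)))]
          rw [hq1]
          simp only [Nat.sub_self, pow_zero, mul_one]
          rw [show n - p = 1 from by omega, pow_one, div_mul_div_comm, one_mul]
        rw [hn, key_split p q (by omega) hq x y hx hy, h1 x y hx hy,
            add_mul, lemA_mulstep n c₁ x (x+y), lemA_mulstep n c₂ y (x+y), hdelta]
        simp only [Int.cast_add, add_mul, Finset.sum_add_distrib]
        ring
    rcases Nat.lt_or_ge 2 n with h | h
    all_goals intro p q hn hp hq
    · rcases Nat.lt_or_ge 1 p with hp2 | hp1
      · exact main p q hn hp2 hq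
      · have hp1 : p = 1 := by omega
        rcases Nat.lt_or_ge 1 q with hq2 | hq1
        · exact PF_swap p q (main q p (by omega) hq2 (by omega))
        · -- p = q = 1 but then n = 2 contradicting 1 < n - 1
          omega
    · -- n ≤ 2 : p = q = 1 (or impossible)
      have hp1 : p = 1 := by omega
      have hq1 : q = 1 := by omega
      subst hp1; subst hq1
      refine ⟨fun a => if a = 1 then 1 else 0, fun a => if a = 1 then 1 else 0,
              fun x y hx hy => ?_⟩
      have hx' := hx.ne'
      have hy' := hy.ne'
      have hxy : x + y ≠ 0 := by positivity
      norm_num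
      field_simp
      ring

noncomputable def pS {m : ℕ} (x : Fin m → ℝ) (j : Fin m) : ℝ :=
  ∑ l ∈ Finset.univ.filter (fun l => l ≤ j), x l

lemma pS_castSucc {m : ℕ} (x : Fin (m+1) → ℝ) (j : Fin m) :
    pS x (Fin.castSucc j) = pS (x ∘ Fin.castSucc) j := by
  unfold pS
  rw [Finset.sum_filter, Finset.sum_filter, Fin.sum_univ_castSucc]
  simp [Fin.castSucc_le_castSucc_iff, not_le.mpr (Fin.castSucc_lt_last j)]

lemma pS_last {m : ℕ} (x : Fin (m+1) → ℝ) :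
    pS x (Fin.last m) = ∑ l, x l := by
  unfold pS
  rw [Finset.filter_true_of_mem (fun l _ => Fin.le_last l)]

lemma pS_pos {m : ℕ} {x : Fin m → ℝ} (hx : ∀ l, 0 < x l) (j : Fin m) : 0 < pS x j :=
  Finset.sum_pos (fun l _ => hx l) ⟨j, by simp⟩

lemma one_le_pS {m : ℕ} {x : Fin m → ℝ} (hx : ∀ l, 1 ≤ x l) (j : Fin m) : 1 ≤ pS x j := by
  calc (1:ℝ) ≤ x j := hx j
  _ ≤ pS x j := Finset.single_le_sum (f := x) (fun l _ => le_trans zero_le_one (hx l)) (by simp)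

/-- `F` (on the positive orthant) is a `ℤ`-linear combination of chain monomials
of weight `w`. -/
def MTRep (d w : ℕ) (F : (Fin d → ℝ) → ℝ) : Prop :=
  ∃ (ι : Type) (_ : Fintype ι) (coef : ι → ℤ) (τ : ι → (Fin d ≃ Fin d)) (u : ι → Fin d → ℕ),
    (∀ i j, 1 ≤ u i j) ∧ (∀ i, ∑ j, u i j = w) ∧
    ∀ x : Fin d → ℝ, (∀ l, 0 < x l) →
      F x = ∑ i, (coef i : ℝ) * ∏ j, 1/(pS (x ∘ ⇑(τ i)) j)^(u i j)

lemma MTRep.congr {d w : ℕ} {F G : (Fin d → ℝ) → ℝ} (h : MTRep d w F)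
    (hFG : ∀ x, (∀ l, 0 < x l) → F x = G x) : MTRep d w G := by
  obtain ⟨ι, _, coef, τ, u, h1, h2, h3⟩ := h
  exact ⟨ι, ‹_›, coef, τ, u, h1, h2, fun x hx => (hFG x hx) ▸ h3 x hx⟩

lemma MTRep.zero {d w : ℕ} : MTRep d w (fun _ => 0) :=
  ⟨Empty, inferInstance, fun i => i.elim, fun i => i.elim, fun i => i.elim,
    fun i => i.elim, fun i => i.elim, fun x _ => by simp⟩

lemma MTRep.add {d w : ℕ} {F G : (Fin d → ℝ) → ℝ} (hF : MTRep d w F) (hG : MTRep d w G) :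
    MTRep d w (fun x => F x + G x) := by
  obtain ⟨ι, _, coef, τ, u, h1, h2, h3⟩ := hF
  obtain ⟨ι', _, coef', τ', u', h1', h2', h3'⟩ := hG
  refine ⟨ι ⊕ ι', inferInstance, Sum.elim coef coef', Sum.elim τ τ', Sum.elim u u',
    fun i => by cases i <;> simp [h1, h1'], fun i => by cases i <;> simp [h2, h2'],
    fun x hx => ?_⟩
  rw [Fintype.sum_sum_type]
  simp only [Sum.elim_inl, Sum.elim_inr]
  rw [← h3 x hx, ← h3' x hx]

lemma MTRep.zsmul {d w : ℕ} (c : ℤ) {F : (Fin d → ℝ) → ℝ} (hF : MTRep d w F) :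
    MTRep d w (fun x => (c : ℝ) * F x) := by
  obtain ⟨ι, _, coef, τ, u, h1, h2, h3⟩ := hF
  refine ⟨ι, ‹_›, fun i => c * coef i, τ, u, h1, h2, fun x hx => ?_⟩
  beta_reduce
  rw [h3 x hx, Finset.mul_sum]
  exact Finset.sum_congr rfl fun i _ => by push_cast; ring

lemma MTRep.sum {d w : ℕ} {κ : Type*} (s : Finset κ) (F : κ → (Fin d → ℝ) → ℝ)
    (h : ∀ k ∈ s, MTRep d w (F k)) : MTRep d w (fun x => ∑ k ∈ s, F k x) := by
  classical
  induction s using Finset.induction_on with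
  | empty => exact MTRep.congr MTRep.zero (fun x _ => by simp)
  | @insert a s' hk ih =>
    refine MTRep.congr (MTRep.add (h a (by simp)) (ih (fun k hks => h k (by simp [hks])))) ?_
    intro x _
    rw [Finset.sum_insert hk]

lemma MTRep.single {d w : ℕ} (τ : Fin d ≃ Fin d) (u : Fin d → ℕ)
    (h1 : ∀ j, 1 ≤ u j) (h2 : ∑ j, u j = w) :
    MTRep d w (fun x => ∏ j, 1/(pS (x ∘ ⇑τ) j)^(u j)) := by
  refine ⟨Unit, inferInstance, fun _ => 1, fun _ => τ, fun _ => u, fun _ => h1, fun _ => h2,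
    fun x hx => ?_⟩
  simp

lemma MTRep.comp_equiv {d w : ℕ} (φ : Fin d ≃ Fin d) {F : (Fin d → ℝ) → ℝ} (hF : MTRep d w F) :
    MTRep d w (fun x => F (x ∘ ⇑φ)) := by
  obtain ⟨ι, _, coef, τ, u, h1, h2, h3⟩ := hF
  refine ⟨ι, ‹_›, coef, fun i => (τ i).trans φ, u, h1, h2, fun x hx => ?_⟩
  beta_reduce
  rw [h3 (x ∘ ⇑φ) (fun l => hx _)]
  refine Finset.sum_congr rfl fun i _ => ?_
  simp only [Equiv.coe_trans, Function.comp_assoc]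

def eqSnoc {m : ℕ} (g : Fin m ≃ Fin m) : Fin (m+1) ≃ Fin (m+1) where
  toFun := Fin.snoc (fun i => Fin.castSucc (g i)) (Fin.last m)
  invFun := Fin.snoc (fun i => Fin.castSucc (g.symm i)) (Fin.last m)
  left_inv := by
    intro i
    induction i using Fin.lastCases with
    | last => simp
    | cast i => simp
  right_inv := by
    intro i
    induction i using Fin.lastCases with
    | last => simp
    | cast i => simp

lemma eqSnoc_castSucc {m : ℕ} (g : Fin m ≃ Fin m) (i : Fin m) :
    eqSnoc g (Fin.castSucc i) = Fin.castSucc (g i) := by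
  simp [eqSnoc]

lemma eqSnoc_last {m : ℕ} (g : Fin m ≃ Fin m) :
    eqSnoc g (Fin.last m) = Fin.last m := by
  simp [eqSnoc]

def emb (m : ℕ) : Fin (m+1) → Fin (m+2) :=
  Fin.snoc (fun i => Fin.castSucc (Fin.castSucc i)) (Fin.last (m+1))

def chiEq {m : ℕ} (τ : Fin (m+1) ≃ Fin (m+1)) : Fin (m+2) ≃ Fin (m+2) :=
  (eqSnoc τ).trans (Equiv.swap (Fin.castSucc (Fin.last m)) (Fin.last (m+1)))

lemma chiEq_castSucc {m : ℕ} (τ : Fin (m+1) ≃ Fin (m+1)) (i : Fin (m+1)) :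
    chiEq τ (Fin.castSucc i) = emb m (τ i) := by
  simp only [chiEq, Equiv.trans_apply, eqSnoc_castSucc]
  rcases Fin.eq_castSucc_or_eq_last (τ i) with ⟨k, hk⟩ | hk <;> rw [hk]
  · rw [Equiv.swap_apply_of_ne_of_ne]
    · simp [emb]
    · simp only [ne_eq, Fin.castSucc_inj]
      exact fun h => (Fin.castSucc_lt_last k).ne h
    · exact (Fin.castSucc_lt_last _).ne
  · rw [Equiv.swap_apply_left]
    simp [emb]

lemma chiEq_last {m : ℕ} (τ : Fin (m+1) ≃ Fin (m+1)) :
    chiEq τ (Fin.last (m+1)) = Fin.castSucc (Fin.last m) := by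
  simp only [chiEq, Equiv.trans_apply, eqSnoc_last, Equiv.swap_apply_right]

lemma MTRep.liftTop {m w : ℕ} (c : ℕ) (hc : 1 ≤ c) {F : (Fin (m+1) → ℝ) → ℝ}
    (hF : MTRep (m+1) w F) :
    MTRep (m+2) (w + c) (fun Y => F (Y ∘ emb m) * (1/(∑ l, Y l)^c)) := by
  obtain ⟨ι, _, coef, τ, u, h1, h2, h3⟩ := hF
  refine ⟨ι, ‹_›, coef, fun i => chiEq (τ i), fun i => Fin.snoc (u i) c, ?_, ?_, ?_⟩
  · intro i j
    induction j using Fin.lastCases with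
    | last => simpa using hc
    | cast j => simpa using h1 i j
  · intro i
    rw [Fin.sum_univ_castSucc]
    simp [h2 i]
  · intro Y hY
    beta_reduce
    have hpos : ∀ l, 0 < (Y ∘ emb m) l := fun l => hY _
    rw [h3 (Y ∘ emb m) hpos, Finset.sum_mul]
    refine Finset.sum_congr rfl fun i _ => ?_
    have key : ∏ j : Fin (m+2), 1/(pS (Y ∘ ⇑(chiEq (τ i))) j)^((Fin.snoc (u i) c : Fin (m+2) → ℕ) j)
        = (∏ j : Fin (m+1), 1/(pS ((Y ∘ emb m) ∘ ⇑(τ i)) j)^(u i j)) * (1/(∑ l, Y l)^c) := by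
      rw [Fin.prod_univ_castSucc]
      congr 1
      · refine Finset.prod_congr rfl fun j _ => ?_
        rw [Fin.snoc_castSucc, pS_castSucc]
        have harg : (Y ∘ ⇑(chiEq (τ i))) ∘ Fin.castSucc = (Y ∘ emb m) ∘ ⇑(τ i) := by
          funext l
          simp [chiEq_castSucc, Function.comp]
        rw [harg]
      · rw [Fin.snoc_last, pS_last]
        have hsum : ∑ l, (Y ∘ ⇑(chiEq (τ i))) l = ∑ l, Y l := Equiv.sum_comp (chiEq (τ i)) Y
        rw [hsum]
    rw [key, mul_assoc]

lemma lemB : ∀ (m : ℕ) (t : Fin m → ℕ), (∀ j, 1 ≤ t j) → ∀ q, 1 ≤ q →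
    MTRep (m+1) ((∑ j, t j) + q)
      (fun y : Fin (m+1) → ℝ =>
        (∏ j : Fin m, 1/(pS (y ∘ Fin.castSucc) j)^(t j)) * (1/(y (Fin.last m))^q)) := by
  intro m
  induction m with
  | zero =>
    intro t ht q hq
    refine MTRep.congr (MTRep.single (Equiv.refl _) (fun _ => q) (fun _ => hq) ?_) ?_
    · simp
    · intro y hy
      have h0 : (Finset.univ.filter (fun l : Fin 1 => l ≤ 0)) = Finset.univ := by decide
      simp [pS, h0, Fin.last]
  | succ m ih =>
    intro t ht q hq
    set p := t (Fin.last m) with hp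
    set n := p + q with hn
    obtain ⟨c₁, c₂, hA⟩ := lemA n p q rfl (ht _) hq
    have rep1 : ∀ a ∈ Finset.Icc 1 (n-1), MTRep (m+2) ((∑ j, t j) + q)
        (fun y : Fin (m+2) → ℝ => (c₁ a : ℝ) * ∏ j, 1/(pS (y ∘ ⇑(Equiv.refl (Fin (m+2)))) j)
          ^((Fin.snoc (Fin.snoc (fun j : Fin m => t (Fin.castSucc j)) a) (n-a) : Fin (m+2) → ℕ) j)) := by
      intro a ha
      simp only [Finset.mem_Icc] at ha
      refine MTRep.zsmul _ (MTRep.single (Equiv.refl _) _ ?_ ?_)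
      · intro j
        induction j using Fin.lastCases with
        | last => simp only [Fin.snoc_last]; omega
        | cast j =>
          induction j using Fin.lastCases with
          | last => simp only [Fin.snoc_castSucc, Fin.snoc_last]; omega
          | cast j => simp only [Fin.snoc_castSucc]; exact ht _
      · rw [Fin.sum_univ_castSucc, Fin.sum_univ_castSucc]
        simp only [Fin.snoc_castSucc, Fin.snoc_last]
        have hsum : ∑ j : Fin (m+1), t j = (∑ j : Fin m, t (Fin.castSucc j)) + t (Fin.last m) :=
          Fin.sum_univ_castSucc t
        omega
    have rep2 : ∀ a ∈ Finset.Icc 1 (n-1), MTRep (m+2) ((∑ j, t j) + q)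
        (fun y : Fin (m+2) → ℝ => (c₂ a : ℝ) *
          ((fun z : Fin (m+1) → ℝ =>
              (∏ j : Fin m, 1/(pS (z ∘ Fin.castSucc) j)^(t (Fin.castSucc j))) *
              (1/(z (Fin.last m))^a)) (y ∘ emb m) * (1/(∑ l, y l)^(n-a)))) := by
      intro a ha
      simp only [Finset.mem_Icc] at ha
      have hB := ih (fun j => t (Fin.castSucc j)) (fun j => ht _) a ha.1
      have hL := MTRep.liftTop (n-a) (by omega) hB
      have hw : ((∑ j : Fin m, t (Fin.castSucc j)) + a) + (n-a) = (∑ j, t j) + q := by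
        have hsum : ∑ j : Fin (m+1), t j = (∑ j : Fin m, t (Fin.castSucc j)) + t (Fin.last m) :=
          Fin.sum_univ_castSucc t
        omega
      rw [hw] at hL
      exact MTRep.zsmul _ hL
    refine MTRep.congr (MTRep.add (MTRep.sum _ _ rep1) (MTRep.sum _ _ rep2)) ?_
    intro y hy
    beta_reduce
    have hXpos : 0 < pS (y ∘ Fin.castSucc) (Fin.last m) := pS_pos (fun l => hy _) _
    have hWpos : 0 < y (Fin.last (m+1)) := hy _
    have hA' := hA _ _ hXpos hWpos
    have hXW : pS (y ∘ Fin.castSucc) (Fin.last m) + y (Fin.last (m+1)) = pS y (Fin.last (m+1)) := by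
      rw [pS_last, pS_last]
      conv_rhs => rw [Fin.sum_univ_castSucc]
      simp [Function.comp]
    rw [hXW] at hA'
    have hembc : (y ∘ emb m) ∘ Fin.castSucc = (y ∘ Fin.castSucc) ∘ Fin.castSucc := by
      funext l
      simp [emb, Function.comp]
    have hembl : (y ∘ emb m) (Fin.last m) = y (Fin.last (m+1)) := by
      simp [emb, Function.comp]
    have hSf : (∑ l, y l) = pS y (Fin.last (m+1)) := (pS_last y).symm
    simp only [Equiv.coe_refl, Function.comp_id, hembc, hembl, hSf,
      Fin.prod_univ_castSucc, Fin.snoc_castSucc, Fin.snoc_last, pS_castSucc]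
    -- now identify and finish
    set X := pS ((y ∘ Fin.castSucc)) (Fin.last m) with hX
    set W := y (Fin.last (m+1)) with hW
    set S := pS y (Fin.last (m+1)) with hS
    set P₀ := ∏ j : Fin m, 1/(pS ((y ∘ Fin.castSucc) ∘ Fin.castSucc) j)^(t (Fin.castSucc j)) with hP
    calc (∑ a ∈ Finset.Icc 1 (n-1), (c₁ a : ℝ) * ((P₀ * (1/X^a)) * (1/S^(n-a))))
          + ∑ a ∈ Finset.Icc 1 (n-1), (c₂ a : ℝ) * ((P₀ * (1/W^a)) * (1/S^(n-a)))
        = P₀ * ((∑ a ∈ Finset.Icc 1 (n-1), (c₁ a : ℝ) * (1/(X^a * S^(n-a))))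
            + ∑ a ∈ Finset.Icc 1 (n-1), (c₂ a : ℝ) * (1/(W^a * S^(n-a)))) := by
          rw [mul_add, Finset.mul_sum, Finset.mul_sum]
          congr 1 <;> exact Finset.sum_congr rfl fun a _ => by ring
      _ = P₀ * (1/(X^p * W^q)) := by rw [← hA']
      _ = (P₀ * (1/X^p)) * (1/W^q) := by ring

lemma lemC : ∀ (d : ℕ) (σ : Fin d → ℕ), (∀ i, 1 ≤ σ i) →
    MTRep d (∑ i, σ i) (fun x => ∏ i, 1/(x i)^(σ i)) := by
  intro d
  induction d with
  | zero =>
    intro σ hσ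
    refine MTRep.congr (MTRep.single (Equiv.refl _) (fun j => j.elim0)
      (fun j => j.elim0) ?_) ?_
    · simp
    · intro x hx
      simp
  | succ d ihd =>
    intro σ hσ
    obtain ⟨ι, inst, coef, τ, u, h1, h2, h3⟩ := ihd (fun i => σ (Fin.castSucc i)) (fun i => hσ _)
    have rep : ∀ i ∈ (Finset.univ : Finset ι), MTRep (d+1) (∑ i, σ i)
        (fun x : Fin (d+1) → ℝ => (coef i : ℝ) *
          ((fun z : Fin (d+1) → ℝ =>
            (∏ j : Fin d, 1/(pS (z ∘ Fin.castSucc) j)^(u i j)) *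
            (1/(z (Fin.last d))^(σ (Fin.last d)))) (x ∘ ⇑(eqSnoc (τ i))))) := by
      intro i _
      have hB := lemB d (u i) (h1 i) (σ (Fin.last d)) (hσ _)
      have hw : (∑ j, u i j) + σ (Fin.last d) = ∑ i, σ i := by
        have hsum : ∑ i : Fin (d+1), σ i = (∑ i : Fin d, σ (Fin.castSucc i)) + σ (Fin.last d) :=
          Fin.sum_univ_castSucc σ
        rw [h2 i, hsum]
      rw [hw] at hB
      exact MTRep.zsmul _ (MTRep.comp_equiv (eqSnoc (τ i)) hB)
    refine MTRep.congr (MTRep.sum Finset.univ _ rep) ?_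
    intro x hx
    beta_reduce
    have he1 : ∀ i : ι, (x ∘ ⇑(eqSnoc (τ i))) ∘ Fin.castSucc = (x ∘ Fin.castSucc) ∘ ⇑(τ i) :=
      fun i => funext fun l => by simp [eqSnoc_castSucc, Function.comp]
    have he2 : ∀ i : ι, (x ∘ ⇑(eqSnoc (τ i))) (Fin.last d) = x (Fin.last d) :=
      fun i => by simp [eqSnoc_last, Function.comp]
    simp only [he1, he2]
    have h3' := h3 (x ∘ Fin.castSucc) (fun l => hx _)
    beta_reduce at h3'
    have step : ∀ (A : ι → ℝ) (B : ℝ), ∑ i, (coef i:ℝ) * (A i * B) = (∑ i, (coef i:ℝ) * A i) * B := by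
      intro A B
      rw [Finset.sum_mul]
      exact Finset.sum_congr rfl fun i _ => by ring
    rw [step, ← h3', Fin.prod_univ_castSucc]
    simp [Function.comp]

open Filter Topology

lemma telescope (Y : ℝ) (hY : 0 < Y) :
    HasSum (fun k : ℕ => 1/(Y+k) - 1/(Y+k+1)) (1/Y) := by
  have hnn : ∀ k : ℕ, 0 ≤ 1/(Y+k) - 1/(Y+k+1) := by
    intro k
    have h1 : (0:ℝ) < Y + k := by positivity
    have h2 : (Y+(k:ℝ)) ≤ Y+k+1 := by linarith
    have := one_div_le_one_div_of_le h1 h2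
    linarith
  rw [hasSum_iff_tendsto_nat_of_nonneg hnn]
  have hps : ∀ N : ℕ, ∑ k ∈ Finset.range N, (1/(Y+k) - 1/(Y+k+1)) = 1/Y - 1/(Y+N) := by
    intro N
    induction N with
    | zero => simp
    | succ N ihN =>
      rw [Finset.sum_range_succ, ihN]
      push_cast
      ring
  simp only [hps]
  have h2 : Tendsto (fun N : ℕ => 1/(Y+N)) atTop (𝓝 0) := by
    have ha : Tendsto (fun N : ℕ => Y + (N:ℝ)) atTop atTop :=
      tendsto_atTop_add_const_left _ Y tendsto_natCast_atTop_atTop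
    simpa [one_div, Function.comp_def] using tendsto_inv_atTop_zero.comp ha
  simpa using tendsto_const_nhds.sub h2

lemma tailN (Y : ℝ) (hY : 1 ≤ Y) (t : ℕ) (ht : 2 ≤ t) :
    Summable (fun k : ℕ => 1/(Y + ((k:ℝ)+1))^t) ∧
      (∑' k : ℕ, 1/(Y + ((k:ℝ)+1))^t) ≤ 1/Y^(t-1) := by
  have hY0 : (0:ℝ) < Y := by linarith
  have hbd : ∀ k : ℕ, 1/(Y + ((k:ℝ)+1))^t ≤ (1/Y^(t-2)) * (1/(Y+k) - 1/(Y+k+1)) := by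
    intro k
    have h1 : (0:ℝ) < Y + k := by positivity
    have h2 : (0:ℝ) < Y + k + 1 := by positivity
    have e1 : 1/(Y+(k:ℝ)) - 1/(Y+k+1) = 1/((Y+k)*(Y+k+1)) := by
      field_simp
      ring
    rw [e1, div_mul_div_comm, one_mul]
    have hle : Y^(t-2)*((Y+(k:ℝ))*(Y+k+1)) ≤ (Y+(k:ℝ)+1)^t := by
      calc Y^(t-2)*((Y+(k:ℝ))*(Y+k+1)) ≤ (Y+(k:ℝ)+1)^(t-2)*((Y+(k:ℝ)+1)*(Y+k+1)) := by
            apply mul_le_mul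
            · exact pow_le_pow_left₀ (by positivity) (by linarith) _
            · exact mul_le_mul_of_nonneg_right (by linarith) (by positivity)
            · positivity
            · positivity
        _ = (Y+(k:ℝ)+1)^(t-2) * (Y+(k:ℝ)+1)^2 := by ring
        _ = (Y+(k:ℝ)+1)^t := by rw [← pow_add]; congr 1; omega
    have : 1/(Y + ((k:ℝ)+1))^t ≤ 1/(Y^(t-2)*((Y+(k:ℝ))*(Y+k+1))) := by
      apply one_div_le_one_div_of_le
      · positivity
      · calc Y^(t-2)*((Y+(k:ℝ))*(Y+k+1)) ≤ (Y+(k:ℝ)+1)^t := hle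
          _ = (Y + ((k:ℝ)+1))^t := by ring_nf
    calc 1/(Y + ((k:ℝ)+1))^t ≤ 1/(Y^(t-2)*((Y+(k:ℝ))*(Y+k+1))) := this
      _ = _ := by ring_nf
  have hnn : ∀ k : ℕ, (0:ℝ) ≤ 1/(Y + ((k:ℝ)+1))^t := by
    intro k
    positivity
  have hbsum : Summable (fun k : ℕ => (1/Y^(t-2)) * (1/(Y+(k:ℝ)) - 1/(Y+k+1))) :=
    ((telescope Y hY0).summable).mul_left _
  have hsummable : Summable (fun k : ℕ => 1/(Y + ((k:ℝ)+1))^t) :=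
    Summable.of_nonneg_of_le hnn hbd hbsum
  refine ⟨hsummable, ?_⟩
  calc (∑' k : ℕ, 1/(Y + ((k:ℝ)+1))^t)
      ≤ ∑' k : ℕ, (1/Y^(t-2)) * (1/(Y+(k:ℝ)) - 1/(Y+k+1)) :=
        Summable.tsum_le_tsum hbd hsummable hbsum
    _ = (1/Y^(t-2)) * (1/Y) := by
        rw [tsum_mul_left, (telescope Y hY0).tsum_eq]
    _ = 1/Y^(t-1) := by
        rw [div_mul_div_comm, one_mul, ← pow_succ]
        congr 2
        omega

lemma tailP (Y : ℝ) (hY : 1 ≤ Y) (t : ℕ) (ht : 2 ≤ t) :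
    Summable (fun a : ℕ+ => 1/(Y + ((a:ℕ):ℝ))^t) ∧
      (∑' a : ℕ+, 1/(Y + ((a:ℕ):ℝ))^t) ≤ 1/Y^(t-1) := by
  obtain ⟨h1, h2⟩ := tailN Y hY t ht
  have hfe : (fun k : ℕ => (fun a : ℕ+ => 1/(Y + ((a:ℕ):ℝ))^t) (Equiv.pnatEquivNat.symm k))
      = fun k : ℕ => 1/(Y + ((k:ℝ)+1))^t := by
    funext k
    simp [Equiv.pnatEquivNat]
  constructor
  · rw [← Equiv.summable_iff (Equiv.pnatEquivNat.symm)]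
    rw [show ((fun a : ℕ+ => 1/(Y + ((a:ℕ):ℝ))^t) ∘ (Equiv.pnatEquivNat.symm)) = _ from hfe]
    exact h1
  · rw [← Equiv.tsum_eq (Equiv.pnatEquivNat.symm) (fun a : ℕ+ => 1/(Y + ((a:ℕ):ℝ))^t)]
    calc ∑' k : ℕ, (fun a : ℕ+ => 1/(Y + ((a:ℕ):ℝ))^t) (Equiv.pnatEquivNat.symm k)
        = ∑' k : ℕ, 1/(Y + ((k:ℝ)+1))^t := by rw [hfe]
      _ ≤ 1/Y^(t-1) := h2

/-- cast a `ℕ+`-tuple to `ℝ`. -/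
noncomputable def castR {k : ℕ} (m : Fin k → ℕ+) : Fin k → ℝ := fun l => ((m l : ℕ) : ℝ)

lemma castR_pos {k : ℕ} (m : Fin k → ℕ+) : ∀ l, 0 < castR m l := by
  intro l
  unfold castR
  exact_mod_cast (m l).2

lemma castR_one_le {k : ℕ} (m : Fin k → ℕ+) : ∀ l, 1 ≤ castR m l := by
  intro l
  unfold castR
  exact_mod_cast (m l).2

def splitLast (d : ℕ) : (Fin (d+1) → ℕ+) ≃ (Fin d → ℕ+) × ℕ+ where
  toFun := fun n => (n ∘ Fin.castSucc, n (Fin.last d))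
  invFun := fun p => Fin.snoc p.1 p.2
  left_inv := by
    intro n
    funext i
    induction i using Fin.lastCases with
    | last => simp
    | cast i => simp
  right_inv := by
    intro p
    refine Prod.ext ?_ ?_
    · funext i
      simp
    · simp

lemma mzv_summable : ∀ (d : ℕ) (t : Fin (d+1) → ℕ), (∀ j, 1 ≤ t j) → 2 ≤ t (Fin.last d) →
    Summable (fun n : Fin (d+1) → ℕ+ => ∏ j, 1/(pS (castR n) j)^(t j)) := by
  intro d
  induction d with
  | zero =>
    intro t ht htop
    rw [← Equiv.summable_iff (Equiv.funUnique (Fin 1) ℕ+).symm]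
    have he : ((fun n : Fin 1 → ℕ+ => ∏ j, 1/(pS (castR n) j)^(t j)) ∘
        (Equiv.funUnique (Fin 1) ℕ+).symm) = fun a : ℕ+ => 1/(((a:ℕ):ℝ))^(t 0) := by
      funext a
      have h0 : (Finset.univ.filter (fun l : Fin 1 => l ≤ 0)) = Finset.univ := by decide
      simp [pS, h0, castR]
    rw [he]
    have h2 : 2 ≤ t 0 := htop
    have hs : Summable (fun n : ℕ => 1/((n:ℝ))^(t 0)) :=
      Real.summable_one_div_nat_pow.mpr (by omega)
    exact hs.comp_injective (fun a b hab => PNat.coe_injective hab)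
  | succ d ihd =>
    intro t ht htop
    rw [← Equiv.summable_iff (splitLast (d+1)).symm]
    set f := fun n : Fin (d+2) → ℕ+ => ∏ j, 1/(pS (castR n) j)^(t j) with hf
    have hcast : ∀ (m : Fin (d+1) → ℕ+) (a : ℕ+),
        castR (Fin.snoc m a : Fin (d+2) → ℕ+) = Fin.snoc (castR m) ((a:ℕ):ℝ) := by
      intro m a
      funext l
      induction l using Fin.lastCases with
      | last => simp [castR]
      | cast l => simp [castR]
    have hg : ∀ (m : Fin (d+1) → ℕ+) (a : ℕ+),
        f (Fin.snoc m a) = (∏ j : Fin (d+1), 1/(pS (castR m) j)^(t (Fin.castSucc j))) *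
          (1/(pS (castR m) (Fin.last d) + ((a:ℕ):ℝ))^(t (Fin.last (d+1)))) := by
      intro m a
      rw [hf]
      beta_reduce
      rw [hcast, Fin.prod_univ_castSucc]
      congr 1
      · refine Finset.prod_congr rfl fun j _ => ?_
        rw [pS_castSucc]
        have e : (Fin.snoc (castR m) (((a:ℕ):ℝ)) : Fin (d+2) → ℝ) ∘ Fin.castSucc = castR m := by
          funext l
          simp
        rw [e]
      · rw [pS_last, Fin.sum_univ_castSucc, pS_last]
        simp
    have hY1 : ∀ m : Fin (d+1) → ℕ+, 1 ≤ pS (castR m) (Fin.last d) :=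
      fun m => one_le_pS (castR_one_le m) _
    have hCnn : ∀ m : Fin (d+1) → ℕ+,
        0 ≤ ∏ j : Fin (d+1), 1/(pS (castR m) j)^(t (Fin.castSucc j)) := by
      intro m
      refine Finset.prod_nonneg fun j _ => ?_
      have := pS_pos (castR_pos m) j
      positivity
    have hfnn : ∀ p : (Fin (d+1) → ℕ+) × ℕ+, 0 ≤ f ((splitLast (d+1)).symm p) := by
      intro p
      have : (splitLast (d+1)).symm p = Fin.snoc p.1 p.2 := rfl
      rw [this, hg]
      have h1 := hY1 p.1
      have h2 : (0:ℝ) < ((p.2:ℕ):ℝ) := by exact_mod_cast p.2.2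
      have := hCnn p.1
      positivity
    apply (summable_prod_of_nonneg hfnn).mpr
    constructor
    · intro m
      beta_reduce
      have heq : (fun a : ℕ+ => f ((splitLast (d+1)).symm (m, a)))
          = fun a : ℕ+ => (∏ j : Fin (d+1), 1/(pS (castR m) j)^(t (Fin.castSucc j))) *
            (1/(pS (castR m) (Fin.last d) + ((a:ℕ):ℝ))^(t (Fin.last (d+1)))) := by
        funext a
        exact hg m a
      rw [heq]
      exact ((tailP _ (hY1 m) _ htop).1).mul_left _
    · -- summability of the outer sums
      have hbound : ∀ m : Fin (d+1) → ℕ+,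
          (∑' a : ℕ+, f ((splitLast (d+1)).symm (m, a)))
            ≤ ∏ j : Fin (d+1), 1/(pS (castR m) j)
              ^(t (Fin.castSucc j) + (if j = Fin.last d then t (Fin.last (d+1)) - 1 else 0)) := by
        intro m
        have heq : (fun a : ℕ+ => f ((splitLast (d+1)).symm (m, a)))
            = fun a : ℕ+ => (∏ j : Fin (d+1), 1/(pS (castR m) j)^(t (Fin.castSucc j))) *
              (1/(pS (castR m) (Fin.last d) + ((a:ℕ):ℝ))^(t (Fin.last (d+1)))) := by
          funext a
          exact hg m a
        rw [heq, tsum_mul_left]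
        have h1 := (tailP _ (hY1 m) _ htop).2
        have h2 : ∏ j : Fin (d+1), 1/(pS (castR m) j)
              ^(t (Fin.castSucc j) + (if j = Fin.last d then t (Fin.last (d+1)) - 1 else 0))
            = (∏ j : Fin (d+1), 1/(pS (castR m) j)^(t (Fin.castSucc j))) *
              (1/(pS (castR m) (Fin.last d))^(t (Fin.last (d+1)) - 1)) := by
          have e1 : ∀ j : Fin (d+1), 1/(pS (castR m) j)
                ^(t (Fin.castSucc j) + (if j = Fin.last d then t (Fin.last (d+1)) - 1 else 0))
              = (1/(pS (castR m) j)^(t (Fin.castSucc j))) *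
                (1/(pS (castR m) j)^(if j = Fin.last d then t (Fin.last (d+1)) - 1 else 0)) := by
            intro j
            rw [pow_add]
            rw [div_mul_div_comm, one_mul]
          rw [Finset.prod_congr rfl (fun j _ => e1 j), Finset.prod_mul_distrib]
          congr 1
          rw [Finset.prod_eq_single_of_mem (Fin.last d) (Finset.mem_univ _)
            (fun b _ hb => by rw [if_neg hb]; simp)]
          rw [if_pos rfl]
        rw [h2]
        exact mul_le_mul_of_nonneg_left h1 (hCnn m)
      apply Summable.of_nonneg_of_le (fun m => tsum_nonneg (fun a => hfnn (m, a))) hbound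
      exact ihd (fun j => t (Fin.castSucc j) + (if j = Fin.last d then t (Fin.last (d+1)) - 1 else 0))
        (fun j => by have := ht (Fin.castSucc j); by_cases hj : j = Fin.last d <;> simp [hj] <;> omega)
        (by have := ht (Fin.castSucc (Fin.last d)); simp; omega)

def permArrow {k : ℕ} (τ : Fin k ≃ Fin k) : (Fin k → ℕ+) ≃ (Fin k → ℕ+) where
  toFun := fun n => n ∘ ⇑τ
  invFun := fun n => n ∘ ⇑τ.symm
  left_inv := by intro n; funext l; simp
  right_inv := by intro n; funext l; simp

/-- The multiple zeta value of depth `d`: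
`ζ(t₁, …, t_d) = ∑_{0 < k₁ < ⋯ < k_d} ∏ⱼ kⱼ^{-tⱼ}`, parametrized by
`kⱼ = n₁ + ⋯ + nⱼ` over independent positive integers `n₁, …, n_d`. -/
noncomputable def multipleZeta (d : ℕ) (t : Fin d → ℕ) : ℝ :=
  ∑' n : Fin d → ℕ+,
    ∏ j, 1 / (∑ l ∈ Finset.univ.filter (fun l => l ≤ j), (((n l : ℕ)) : ℝ)) ^ (t j)

/-- Theorem 4.1 for a single internal vertex (Bradley–Zhou with `ℤ` coefficients):
the Mordell–Tornheim sum `T(σ₁, …, σ_d ; s)` converges and is a finite `ℤ`-linear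
combination of multiple zeta values of depth `d` and weight `σ₁ + ⋯ + σ_d + s`. -/
theorem mordellTornheim_isZLinearComb_mzv (d : ℕ) (hd : 1 ≤ d)
    (σ : Fin d → ℕ) (hσ : ∀ i, 1 ≤ σ i) (s : ℕ) (hs : 2 ≤ s) :
    Summable (fun n : Fin d → ℕ+ =>
      1 / ((∏ i, (((n i : ℕ)) : ℝ) ^ (σ i)) * (∑ i, (((n i : ℕ)) : ℝ)) ^ s)) ∧
    ∃ (T : Finset (Fin d → ℕ)) (c : (Fin d → ℕ) → ℤ),
      (∀ t ∈ T, (∀ j, 1 ≤ t j) ∧ (∑ j, t j) = (∑ i, σ i) + s) ∧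
      (∑' n : Fin d → ℕ+,
          1 / ((∏ i, (((n i : ℕ)) : ℝ) ^ (σ i)) * (∑ i, (((n i : ℕ)) : ℝ)) ^ s)) =
        ∑ t ∈ T, (c t : ℝ) * multipleZeta d t := by
  classical
  obtain ⟨e, rfl⟩ : ∃ e, d = e + 1 := ⟨d - 1, by omega⟩
  obtain ⟨ι, inst, coef, τ, u, h1, h2, h3⟩ := lemC (e+1) σ hσ
  set u' : ι → Fin (e+1) → ℕ := fun i j => u i j + (if j = Fin.last e then s else 0) with hu'
  have hu'1 : ∀ i j, 1 ≤ u' i j := by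
    intro i j
    have := h1 i j
    rw [hu']
    beta_reduce
    omega
  have hu'top : ∀ i, 2 ≤ u' i (Fin.last e) := by
    intro i
    have h := h1 i (Fin.last e)
    have he : u' i (Fin.last e) = u i (Fin.last e) + s := by simp [hu']
    omega
  have hu'w : ∀ i, ∑ j, u' i j = (∑ i, σ i) + s := by
    intro i
    rw [hu']
    beta_reduce
    rw [Finset.sum_add_distrib, h2 i, Finset.sum_ite_eq' Finset.univ (Fin.last e) (fun _ => s)]
    simp
  -- pointwise identity
  have hpoint : ∀ n : Fin (e+1) → ℕ+,
      1 / ((∏ i, (((n i : ℕ)) : ℝ) ^ (σ i)) * (∑ i, (((n i : ℕ)) : ℝ)) ^ s)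
        = ∑ i : ι, (coef i : ℝ) * ∏ j, 1/(pS (castR n ∘ ⇑(τ i)) j)^(u' i j) := by
    intro n
    have hpos := castR_pos n
    have hP := h3 (castR n) hpos
    have hL : 1 / ((∏ i, (((n i : ℕ)) : ℝ) ^ (σ i)) * (∑ i, (((n i : ℕ)) : ℝ)) ^ s)
        = (∏ i, 1/(castR n i)^(σ i)) * (1/(∑ i, castR n i)^s) := by
      unfold castR
      simp only [one_div]
      rw [Finset.prod_inv_distrib, ← mul_inv]
    beta_reduce at hP
    rw [hL, hP, Finset.sum_mul]
    refine Finset.sum_congr rfl fun i _ => ?_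
    rw [mul_assoc]
    congr 1
    have htop : (∑ l, castR n l) = pS (castR n ∘ ⇑(τ i)) (Fin.last e) := by
      rw [pS_last]
      exact (Equiv.sum_comp (τ i) (castR n)).symm
    rw [htop]
    have e1 : ∀ j, 1/(pS (castR n ∘ ⇑(τ i)) j)^(u' i j)
        = (1/(pS (castR n ∘ ⇑(τ i)) j)^(u i j)) *
          (1/(pS (castR n ∘ ⇑(τ i)) j)^(if j = Fin.last e then s else 0)) := by
      intro j
      rw [hu']
      beta_reduce
      rw [pow_add, div_mul_div_comm, one_mul]
    rw [Finset.prod_congr rfl (fun j _ => e1 j), Finset.prod_mul_distrib]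
    congr 1
    rw [Finset.prod_eq_single_of_mem (Fin.last e) (Finset.mem_univ _)
      (fun b _ hb => by rw [if_neg hb]; simp), if_pos rfl]
  -- summability of each chain-monomial term
  have hEq : ∀ i : ι, (fun n : Fin (e+1) → ℕ+ => ∏ j, 1/(pS (castR n ∘ ⇑(τ i)) j)^(u' i j))
      = (fun n : Fin (e+1) → ℕ+ => ∏ j, 1/(pS (castR n) j)^(u' i j)) ∘ ⇑(permArrow (τ i)) := by
    intro i
    funext n
    rfl
  have hsumm : ∀ i : ι,
      Summable (fun n : Fin (e+1) → ℕ+ => ∏ j, 1/(pS (castR n ∘ ⇑(τ i)) j)^(u' i j)) := by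
    intro i
    rw [hEq i]
    exact (Equiv.summable_iff (permArrow (τ i))).mpr
      (mzv_summable e (u' i) (hu'1 i) (hu'top i))
  have htsum : ∀ i : ι,
      (∑' n : Fin (e+1) → ℕ+, ∏ j, 1/(pS (castR n ∘ ⇑(τ i)) j)^(u' i j))
        = multipleZeta (e+1) (u' i) := by
    intro i
    rw [hEq i]
    exact (Equiv.tsum_eq (permArrow (τ i))
      (fun n : Fin (e+1) → ℕ+ => ∏ j, 1/(pS (castR n) j)^(u' i j))).trans rfl
  have hmain : Summable (fun n : Fin (e+1) → ℕ+ =>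
      1 / ((∏ i, (((n i : ℕ)) : ℝ) ^ (σ i)) * (∑ i, (((n i : ℕ)) : ℝ)) ^ s)) := by
    rw [summable_congr hpoint]
    exact summable_sum (fun i _ => ((hsumm i).mul_left _))
  refine ⟨hmain, Finset.image (fun i => u' i) Finset.univ,
    fun tt => ∑ i ∈ Finset.univ.filter (fun i => u' i = tt), coef i, ?_, ?_⟩
  · intro tt htt
    obtain ⟨i, _, rfl⟩ := Finset.mem_image.mp htt
    exact ⟨hu'1 i, hu'w i⟩
  · rw [tsum_congr hpoint, Summable.tsum_finsetSum (fun i _ => ((hsumm i).mul_left _))]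
    have hper : ∀ i ∈ (Finset.univ : Finset ι),
        (∑' n : Fin (e+1) → ℕ+, (coef i : ℝ) * ∏ j, 1/(pS (castR n ∘ ⇑(τ i)) j)^(u' i j))
          = (coef i : ℝ) * multipleZeta (e+1) (u' i) := by
      intro i _
      rw [tsum_mul_left, htsum i]
    rw [Finset.sum_congr rfl hper,
      ← Finset.sum_fiberwise_of_maps_to (g := fun i => u' i)
        (fun i _ => Finset.mem_image_of_mem _ (Finset.mem_univ i))
        (fun i => (coef i : ℝ) * multipleZeta (e+1) (u' i))]
    refine Finset.sum_congr rfl fun tt htt => ?_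
    rw [Finset.sum_congr rfl (fun i hi => by rw [(Finset.mem_filter.mp hi).2]),
      ← Finset.sum_mul, Int.cast_sum]
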